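/- Let p be a prime, G a finite group, and M a G-lattice. If M ⊗_ℤ 𝔽_p is indecomposable as an 𝔽_p[G]-module, then M ⊗_ℤ ℤ_p is indecomposable as a ℤ_p[G]-module. In particular, M is an indecomposable G-lattice (indecomposable as a ℤ[G]-module). -/

import Mathlib

open scoped TensorProduct in
/-- Base change of a `G`-lattice `M` over `ℤ` to a commutative ring `R`:
the `R[G]`-module `R ⊗[ℤ] M`. -/
noncomputable def repBaseChange (R : Type) [CommRing R] {G M : Type} [Group G]
    [AddCommGroup M] [Module ℤ M] (ρ : Representation ℤ G M) :
    Representation R G (TensorProduct ℤ R M) :=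
  MonoidHom.comp (Module.End.baseChangeHom ℤ R M : Module.End ℤ M →+* Module.End R (TensorProduct ℤ R M)).toMonoidHom ρ

/-- Indecomposability of a representation, i.e. of the corresponding `R[G]`-module:
it is nonzero and admits no splitting into two nonzero invariant direct summands. -/
def IsIndecomposableRep {R G M : Type} [CommRing R] [Group G] [AddCommGroup M] [Module R M]
    (ρ : Representation R G M) : Prop :=
  (∃ m : M, m ≠ 0) ∧
  ∀ N₁ N₂ : Submodule R M,
    (∀ (g : G), ∀ m ∈ N₁, ρ g m ∈ N₁) →
    (∀ (g : G), ∀ m ∈ N₂, ρ g m ∈ N₂) →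
    N₁ ⊓ N₂ = ⊥ → N₁ ⊔ N₂ = ⊤ → N₁ = ⊥ ∨ N₂ = ⊥

/-- The image of an `A`-submodule under an additive map into a `ZMod p`-module,
as a `ZMod p`-submodule. -/
def addImageSubmodule (p : ℕ) {A W V : Type} [CommRing A] [AddCommGroup W] [Module A W]
    [AddCommGroup V] [Module (ZMod p) V] (f : W →+ V) (N : Submodule A W) :
    Submodule (ZMod p) V where
  carrier := f '' (N : Set W)
  add_mem' := by
    rintro _ _ ⟨a, ha, rfl⟩ ⟨b, hb, rfl⟩
    exact ⟨a + b, N.add_mem ha hb, map_add f a b⟩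
  zero_mem' := ⟨0, N.zero_mem, map_zero f⟩
  smul_mem' := by
    rintro c _ ⟨a, ha, rfl⟩
    obtain ⟨z, rfl⟩ := ZMod.intCast_surjective c
    exact ⟨z • a, N.toAddSubgroup.zsmul_mem ha z,
      by rw [map_zsmul, Int.cast_smul_eq_zsmul]⟩

theorem mem_addImageSubmodule (p : ℕ) {A W V : Type} [CommRing A] [AddCommGroup W] [Module A W]
    [AddCommGroup V] [Module (ZMod p) V] (f : W →+ V) (N : Submodule A W) (x : V) :
    x ∈ addImageSubmodule p f N ↔ ∃ a ∈ N, f a = x :=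
  Iff.rfl

open scoped TensorProduct in
theorem repBaseChange_tmul (R : Type) [CommRing R] {G M : Type} [Group G]
    [AddCommGroup M] [Module ℤ M] (ρ : Representation ℤ G M) (g : G) (x : R) (m : M) :
    repBaseChange R ρ g (x ⊗ₜ[ℤ] m) = x ⊗ₜ[ℤ] (ρ g m) := by
  show LinearMap.baseChange R (ρ g) (x ⊗ₜ[ℤ] m) = _
  rw [LinearMap.baseChange_tmul]

/-- Key abstract lemma: if a `ZMod p`-representation `ρV` is indecomposable and there is
a suitable reduction map from an `A`-representation `ρW` onto `ρV`, then `ρW` is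
indecomposable. -/
theorem isIndecomposableRep_of_red {p : ℕ} [Fact p.Prime] {A G V W : Type}
    [CommRing A] [IsNoetherianRing A] [Group G]
    [AddCommGroup V] [Module (ZMod p) V] [AddCommGroup W] [Module A W]
    [Module.Finite A W] [IsDomain A] [Module.IsTorsionFree A W]
    (ρV : Representation (ZMod p) G V) (ρW : Representation A G W)
    (f : W →+ V)
    (hequiv : ∀ g w, f (ρW g w) = ρV g (f w))
    (hker : ∀ w, f w = 0 → ∃ w', w = (p : A) • w')
    (hsur : Submodule.span (ZMod p) (Set.range f) = ⊤)
    (hp : ∀ k : A, (1 : A) + p * k ≠ 0)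
    (h : IsIndecomposableRep ρV) :
    IsIndecomposableRep ρW := by
  -- `f` kills multiples of `p`
  have hfp : ∀ w : W, f ((p : A) • w) = 0 := by
    intro w
    rw [show (p : A) • w = (p : ℕ) • w from Nat.cast_smul_eq_nsmul A p w, map_nsmul,
      show (p : ℕ) • f w = ((p : ℕ) : ZMod p) • f w from
        (Nat.cast_smul_eq_nsmul (ZMod p) p (f w)).symm,
      ZMod.natCast_self, zero_smul]
  constructor
  · -- W is nonzero
    obtain ⟨v, hv⟩ := h.1
    by_contra hW
    push_neg at hW
    apply hv
    have h1 : v ∈ Submodule.span (ZMod p) (Set.range f) := by rw [hsur]; exact trivial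
    have h2 : Submodule.span (ZMod p) (Set.range f) ≤ ⊥ := by
      rw [Submodule.span_le]
      rintro _ ⟨w, rfl⟩
      simp [hW w]
    simpa using h2 h1
  intro N₁ N₂ hN₁ hN₂ hinf hsup
  by_contra hc
  push_neg at hc
  obtain ⟨hb₁, hb₂⟩ := hc
  -- the key divisibility consequence
  have hmul : ∀ {N N' : Submodule A W}, N ⊓ N' = ⊥ → N ⊔ N' = ⊤ →
      ∀ a ∈ N, f a = 0 → ∃ u ∈ N, a = (p : A) • u := by
    intro N N' hinf' hsup' a haN ha0
    obtain ⟨w', rfl⟩ := hker a ha0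
    have hw' : w' ∈ N ⊔ N' := by rw [hsup']; exact trivial
    obtain ⟨u, hu, v, hv, rfl⟩ := Submodule.mem_sup.mp hw'
    refine ⟨u, hu, ?_⟩
    have key : (p : A) • (u + v) - (p : A) • u ∈ N ⊓ N' := by
      constructor
      · exact N.sub_mem haN (N.smul_mem _ hu)
      · have : (p : A) • (u + v) - (p : A) • u = (p : A) • v := by
          rw [smul_add]; abel
        rw [this]
        exact N'.smul_mem _ hv
    rw [hinf'] at key
    have : (p : A) • (u + v) - (p : A) • u = 0 := key
    linear_combination (norm := abel) this
  -- nontriviality of images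
  have himg : ∀ {N N' : Submodule A W}, N ⊓ N' = ⊥ → N ⊔ N' = ⊤ → N ≠ ⊥ →
      addImageSubmodule p f N ≠ ⊥ := by
    intro N N' hinf' hsup' hNbot hFbot
    have hall : ∀ a ∈ N, f a = 0 := by
      intro a ha
      have : f a ∈ addImageSubmodule p f N := ⟨a, ha, rfl⟩
      rw [hFbot] at this
      simpa using this
    have hle : N ≤ (Ideal.span {(p : A)}) • N := by
      intro a ha
      obtain ⟨u, hu, rfl⟩ := hmul hinf' hsup' a ha (hall a ha)
      exact Submodule.smul_mem_smul (Ideal.mem_span_singleton_self _) hu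
    obtain ⟨r, hr1, hr0⟩ :=
      Submodule.exists_sub_one_mem_and_smul_eq_zero_of_fg_of_le_smul
        (Ideal.span {(p : A)}) N (IsNoetherian.noetherian N) hle
    obtain ⟨k, hk⟩ := Ideal.mem_span_singleton.mp hr1
    have hrne : r ≠ 0 := by
      have : r = 1 + (p : A) * k := by linear_combination hk
      rw [this]
      exact hp k
    obtain ⟨a, haN, hane⟩ := Submodule.ne_bot_iff N |>.mp hNbot
    have := hr0 a haN
    rcases smul_eq_zero.mp this with h' | h'
    · exact hrne h'
    · exact hane h'
  -- apply indecomposability of ρV to images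
  have hFi₁ : ∀ (g : G), ∀ v ∈ addImageSubmodule p f N₁, ρV g v ∈ addImageSubmodule p f N₁ := by
    rintro g _ ⟨a, ha, rfl⟩
    exact ⟨ρW g a, hN₁ g a ha, hequiv g a⟩
  have hFi₂ : ∀ (g : G), ∀ v ∈ addImageSubmodule p f N₂, ρV g v ∈ addImageSubmodule p f N₂ := by
    rintro g _ ⟨a, ha, rfl⟩
    exact ⟨ρW g a, hN₂ g a ha, hequiv g a⟩
  have hFinf : addImageSubmodule p f N₁ ⊓ addImageSubmodule p f N₂ = ⊥ := by
    rw [eq_bot_iff]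
    rintro x ⟨⟨a, ha, rfl⟩, ⟨b, hb, hba⟩⟩
    have hab : f (a - b) = 0 := by rw [map_sub, hba, sub_self]
    obtain ⟨w', hw'⟩ := hker _ hab
    have hw'mem : w' ∈ N₁ ⊔ N₂ := by rw [hsup]; exact trivial
    obtain ⟨u, hu, v, hv, rfl⟩ := Submodule.mem_sup.mp hw'mem
    have key : a - (p : A) • u ∈ N₁ ⊓ N₂ := by
      constructor
      · exact N₁.sub_mem ha (N₁.smul_mem _ hu)
      · have : a - (p : A) • u = b + (p : A) • v := by
          have := hw'
          rw [smul_add] at this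
          linear_combination (norm := abel) this
        rw [this]
        exact N₂.add_mem hb (N₂.smul_mem _ hv)
    rw [hinf] at key
    have ha' : a = (p : A) • u := by
      have : a - (p : A) • u = 0 := key
      linear_combination (norm := abel) this
    have : f a = 0 := by rw [ha']; exact hfp u
    simp [this]
  have hFsup : addImageSubmodule p f N₁ ⊔ addImageSubmodule p f N₂ = ⊤ := by
    rw [eq_top_iff, ← hsur, Submodule.span_le]
    rintro _ ⟨w, rfl⟩
    have hw : w ∈ N₁ ⊔ N₂ := by rw [hsup]; exact trivial
    obtain ⟨a, ha, b, hb, rfl⟩ := Submodule.mem_sup.mp hw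
    rw [map_add]
    exact Submodule.add_mem _ (Submodule.mem_sup_left ⟨a, ha, rfl⟩)
      (Submodule.mem_sup_right ⟨b, hb, rfl⟩)
  rcases h.2 _ _ hFi₁ hFi₂ hFinf hFsup with hF | hF
  · exact himg hinf hsup hb₁ hF
  · rw [inf_comm] at hinf
    rw [sup_comm] at hsup
    exact himg hinf hsup hb₂ hF

set_option maxHeartbeats 1000000 in
/-- Let `p` be a prime, `G` a finite group and `M` a `G`-lattice.
If `M ⊗_ℤ 𝔽_p` is an indecomposable `𝔽_p[G]`-module, then `M ⊗_ℤ ℤ_p` is an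
indecomposable `ℤ_p[G]`-module; in particular `M` is an indecomposable `G`-lattice. -/
theorem indecomposable_of_indecomposable_mod_p
    (p : ℕ) [Fact p.Prime]
    {G M : Type} [Group G] [Finite G]
    [AddCommGroup M] [Module ℤ M] [Module.Free ℤ M] [Module.Finite ℤ M]
    (ρ : Representation ℤ G M)
    (h : IsIndecomposableRep (repBaseChange (ZMod p) ρ)) :
    IsIndecomposableRep (repBaseChange ℤ_[p] ρ) ∧ IsIndecomposableRep ρ := by
  have hp : p.Prime := Fact.out
  haveI : Fact (1 < p) := ⟨hp.one_lt⟩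
  constructor
  · -- the p-adic part
    set φ : ℤ_[p] →ₗ[ℤ] ZMod p :=
      (PadicInt.toZMod (p := p)).toAddMonoidHom.toIntLinearMap with hφ
    set f : TensorProduct ℤ ℤ_[p] M →ₗ[ℤ] TensorProduct ℤ (ZMod p) M :=
      LinearMap.rTensor M φ with hf
    -- multiplication by p on ℤ_[p] as a ℤ-linear map
    set g1 : ℤ_[p] →ₗ[ℤ] ℤ_[p] :=
      (LinearMap.lsmul ℤ_[p] ℤ_[p] ((p : ℤ_[p]))).restrictScalars ℤ with hg1
    have hexact : Function.Exact g1 φ := by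
      intro y
      constructor
      · intro hy
        have : y ∈ RingHom.ker (PadicInt.toZMod (p := p)) := hy
        rw [PadicInt.ker_toZMod, PadicInt.maximalIdeal_eq_span_p,
          Ideal.mem_span_singleton] at this
        obtain ⟨c, hc⟩ := this
        exact ⟨c, by simp [hg1, hc, smul_eq_mul]⟩
      · rintro ⟨c, rfl⟩
        have : (PadicInt.toZMod (p := p)) ((p : ℤ_[p]) * c) = 0 := by
          rw [map_mul]
          have : (PadicInt.toZMod (p := p)) ((p : ℤ_[p])) = 0 := by
            rw [show ((p : ℤ_[p])) = ((p : ℕ) : ℤ_[p]) by norm_cast, map_natCast,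
              ZMod.natCast_self]
          rw [this, zero_mul]
        simpa [hg1, hφ, smul_eq_mul] using this
    have htensor : Function.Exact (g1.rTensor M) (φ.rTensor M) :=
      Module.Flat.rTensor_exact M hexact
    have hg1t : ∀ t : TensorProduct ℤ ℤ_[p] M, (g1.rTensor M) t = (p : ℤ_[p]) • t := by
      intro t
      induction t using TensorProduct.induction_on with
      | zero => simp
      | tmul x m =>
        rw [LinearMap.rTensor_tmul, TensorProduct.smul_tmul']
        simp [hg1, smul_eq_mul]
      | add a b ha hb => rw [map_add, ha, hb, smul_add]
    refine isIndecomposableRep_of_red (repBaseChange (ZMod p) ρ) (repBaseChange ℤ_[p] ρ)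
      f.toAddMonoidHom ?_ ?_ ?_ ?_ h
    · -- equivariance
      intro g w
      induction w using TensorProduct.induction_on with
      | zero => simp
      | tmul x m =>
        show f (repBaseChange ℤ_[p] ρ g (x ⊗ₜ[ℤ] m)) =
          repBaseChange (ZMod p) ρ g (f (x ⊗ₜ[ℤ] m))
        have e1 : ∀ y : M, f (x ⊗ₜ[ℤ] y) = φ x ⊗ₜ[ℤ] y := fun y => LinearMap.rTensor_tmul (f := φ) M y x
        rw [repBaseChange_tmul, e1, e1, repBaseChange_tmul]
      | add a b ha hb =>
        simp only [map_add, ha, hb]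
    · -- kernel
      intro w hw
      have : (φ.rTensor M) w = 0 := hw
      obtain ⟨t, ht⟩ := (htensor w).mp this
      exact ⟨t, by rw [← ht, hg1t]⟩
    · -- surjectivity of the span
      rw [eq_top_iff]
      rintro v -
      induction v using TensorProduct.induction_on with
      | zero => exact Submodule.zero_mem _
      | tmul c m =>
        obtain ⟨z, rfl⟩ := ZMod.intCast_surjective c
        apply Submodule.subset_span
        refine ⟨(z : ℤ_[p]) ⊗ₜ[ℤ] m, ?_⟩
        simp [hf, LinearMap.rTensor_tmul, hφ]
        erw [LinearMap.rTensor_tmul]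
        simp
      | add a b ha hb =>
        exact Submodule.add_mem _ ha hb
    · -- 1 + p * k ≠ 0 in ℤ_[p]
      intro k hk
      have := congrArg (PadicInt.toZMod (p := p)) hk
      rw [map_add, map_mul, map_one, map_zero] at this
      have hp0 : (PadicInt.toZMod (p := p)) ((p : ℤ_[p])) = 0 := by
        rw [show ((p : ℤ_[p])) = ((p : ℕ) : ℤ_[p]) by norm_cast, map_natCast,
          ZMod.natCast_self]
      rw [hp0, zero_mul, add_zero] at this
      exact one_ne_zero this
  · -- the integral part
    set f0 : M →ₗ[ℤ] TensorProduct ℤ (ZMod p) M :=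
      TensorProduct.mk ℤ (ZMod p) M 1 with hf0
    set g1 : ℤ →ₗ[ℤ] ℤ := LinearMap.lsmul ℤ ℤ (p : ℤ) with hg1
    set g2 : ℤ →ₗ[ℤ] ZMod p := (Int.castAddHom (ZMod p)).toIntLinearMap with hg2
    have hexact : Function.Exact g1 g2 := by
      intro y
      constructor
      · intro hy
        have : ((y : ℤ) : ZMod p) = 0 := hy
        obtain ⟨c, hc⟩ := (ZMod.intCast_zmod_eq_zero_iff_dvd y p).mp this
        exact ⟨c, by simp [hg1, hc, smul_eq_mul]⟩
      · rintro ⟨c, rfl⟩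
        have : ((((p : ℤ) * c) : ℤ) : ZMod p) = 0 := by
          push_cast
          simp
        simpa [hg1, hg2, smul_eq_mul] using this
    have htensor : Function.Exact (g1.rTensor M) (g2.rTensor M) :=
      Module.Flat.rTensor_exact M hexact
    have hg1t : ∀ t : TensorProduct ℤ ℤ M, (g1.rTensor M) t = (p : ℤ) • t := by
      intro t
      induction t using TensorProduct.induction_on with
      | zero => simp
      | tmul x m =>
        rw [LinearMap.rTensor_tmul, TensorProduct.smul_tmul']
        simp [hg1, smul_eq_mul]
      | add a b ha hb => rw [map_add, ha, hb, smul_add]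
    refine isIndecomposableRep_of_red (repBaseChange (ZMod p) ρ) ρ
      f0.toAddMonoidHom ?_ ?_ ?_ ?_ h
    · -- equivariance
      intro g m
      show (1 : ZMod p) ⊗ₜ[ℤ] (ρ g m) = repBaseChange (ZMod p) ρ g ((1 : ZMod p) ⊗ₜ[ℤ] m)
      rw [repBaseChange_tmul]
    · -- kernel
      intro m hm
      have hrw : (g2.rTensor M) ((TensorProduct.lid ℤ M).symm m) = f0 m := by
        rw [TensorProduct.lid_symm_apply, LinearMap.rTensor_tmul]
        simp [hf0, hg2]
        rfl
      have h0 : (g2.rTensor M) ((TensorProduct.lid ℤ M).symm m) = 0 := by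
        rw [hrw]; exact hm
      obtain ⟨t, ht⟩ := (htensor _).mp h0
      rw [hg1t] at ht
      refine ⟨TensorProduct.lid ℤ M t, ?_⟩
      have h2 := (TensorProduct.lid ℤ M).map_smul (p : ℤ) t
      rw [ht, LinearEquiv.apply_symm_apply] at h2
      exact h2
    · -- surjectivity of the span
      rw [eq_top_iff]
      rintro v -
      induction v using TensorProduct.induction_on with
      | zero => exact Submodule.zero_mem _
      | tmul c m =>
        have : c ⊗ₜ[ℤ] m = c • ((1 : ZMod p) ⊗ₜ[ℤ] m) := by
          rw [TensorProduct.smul_tmul', smul_eq_mul, mul_one]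
        rw [this]
        exact Submodule.smul_mem _ _ (Submodule.subset_span ⟨m, rfl⟩)
      | add a b ha hb =>
        exact Submodule.add_mem _ ha hb
    · -- 1 + p * k ≠ 0 in ℤ
      intro k hk
      have hdvd : (p : ℤ) ∣ 1 := ⟨-k, by linarith⟩
      rw [show (1 : ℤ) = ((1 : ℕ) : ℤ) by norm_cast, Int.natCast_dvd_natCast] at hdvd
      exact hp.one_lt.ne' (Nat.dvd_one.mp hdvd)
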